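/- Differentiating the homogeneous functional equation at order zero: let k > 1, let U : (0,∞) → ℂ and C : ℝ → ℂ with C(0) = 1 and C differentiable at 0, and suppose ω^n·U(ω) = C(n)·U(ω·k^{-n}) holds for all real n and all ω > 0. If U is differentiable at a point ω > 0, then ω·(log k)·U'(ω) = (C'(0) - log ω)·U(ω). -/

import Mathlib

/-- Differentiating the homogeneous functional equation at order
zero: if k > 1, C(0) = 1, C is differentiable at 0, and
ω^n·U(ω) = C(n)·U(ω·k^{-n}) for all real n and ω > 0, then at any ω > 0 where
U is differentiable one has ω·(log k)·U'(ω) = (C'(0) - log ω)·U(ω). -/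
theorem altes_functional_equation_deriv (k : ℝ) (hk : 1 < k)
    (U : ℝ → ℂ) (C : ℝ → ℂ) (hC0 : C 0 = 1) (hCdiff : DifferentiableAt ℝ C 0)
    (hfun : ∀ n : ℝ, ∀ ω : ℝ, 0 < ω →
      (↑(ω ^ n) : ℂ) * U ω = C n * U (ω * k ^ (-n)))
    (ω : ℝ) (hω : 0 < ω) (hU : DifferentiableAt ℝ U ω) :
    (ω : ℂ) * (Real.log k : ℂ) * deriv U ω =
      (deriv C 0 - (Real.log ω : ℂ)) * U ω := by
  have hkpos : (0:ℝ) < k := lt_trans one_pos hk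
  -- LHS function derivative
  have hF : HasDerivAt (fun n : ℝ => (↑(ω ^ n) : ℂ) * U ω)
      ((Real.log ω : ℂ) * U ω) 0 := by
    have h1 : HasDerivAt (fun n : ℝ => ω ^ n) (ω ^ (0:ℝ) * Real.log ω) 0 :=
      (Real.hasStrictDerivAt_const_rpow hω 0).hasDerivAt
    have h2 := h1.ofReal_comp.mul_const (U ω)
    simpa using h2
  -- inner function h(n) = ω * k ^ (-n)
  have hh : HasDerivAt (fun n : ℝ => ω * k ^ (-n)) (-(ω * Real.log k)) 0 := by
    have h1 : HasDerivAt (fun n : ℝ => k ^ n) (k ^ (0:ℝ) * Real.log k) 0 :=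
      (Real.hasStrictDerivAt_const_rpow hkpos 0).hasDerivAt
    have h2 : HasDerivAt (fun n : ℝ => k ^ (-n)) (-(k ^ (0:ℝ) * Real.log k)) 0 := by
      have hneg : HasDerivAt (fun n : ℝ => -n) (-1 : ℝ) 0 := (hasDerivAt_id (0:ℝ)).neg
      have h1' : HasDerivAt (fun n : ℝ => k ^ n) (k ^ (0:ℝ) * Real.log k)
          ((fun n : ℝ => -n) 0) := by simpa using h1
      simpa [Function.comp_def] using h1'.comp 0 hneg
    have h3 := h2.const_mul ω
    simpa [Real.rpow_zero, mul_comm] using h3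
  have hUeq : ω * k ^ (-(0:ℝ)) = ω := by simp
  have hV : HasDerivAt (fun n : ℝ => U (ω * k ^ (-n)))
      ((-(ω * Real.log k) : ℝ) • deriv U ω) 0 := by
    have hU' : HasDerivAt U (deriv U ω) (ω * k ^ (-(0:ℝ))) := by
      rw [hUeq]; exact hU.hasDerivAt
    exact hU'.scomp 0 hh
  have hG : HasDerivAt (fun n : ℝ => C n * U (ω * k ^ (-n)))
      (deriv C 0 * U ω + C 0 * ((-(ω * Real.log k) : ℝ) • deriv U ω)) 0 := by
    have := (hCdiff.hasDerivAt).mul hV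
    simpa [hUeq, Pi.mul_def] using this
  have heq : (fun n : ℝ => (↑(ω ^ n) : ℂ) * U ω)
      = fun n : ℝ => C n * U (ω * k ^ (-n)) := by
    funext n; exact hfun n ω hω
  rw [heq] at hF
  have key := hF.unique hG
  rw [hC0] at key
  rw [Complex.real_smul] at key
  push_cast at key
  linear_combination key
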